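/- Let R^(t)(s) denote the t-set Ramsey number, define n_0 = 4 and n_i = R^(t_i - 1)(n_{i-1}) for 1 ≤ i ≤ 5, where (t_1,t_2,t_3,t_4,t_5) = (3,4,4,5,5) are the lengths of the patterns s_1 = 132, s_2 = 1232, s_3 = 1312, s_4 = 13232, s_5 = 13132, and let n ≥ n_5 + 1. Then for every 2-colouring c : [3]^n → {0,1} there exist a set T_0 ⊆ [n-1] with |T_0| ≥ 4 and colours d_1, ..., d_5 ∈ {0,1} such that for each i ∈ {1,...,5}, every word w ∈ [3]^n with T(w) ⊆ T_0 and \overline{w} = s_i satisfies c(w) = d_i. -/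

import Mathlib

/-- The set of breakpoints `T(w) ⊆ {1,…,n-1}` of a word `w ∈ [3]^n`: `a` is a breakpoint
iff `1 ≤ a < n` and the (1-based) letters at positions `a` and `a+1` differ (coordinate
`i : Fin n` encodes 1-based position `i+1`). -/
def breakpoints {n : ℕ} (w : Fin n → Fin 3) : Set ℕ :=
  {a | ∃ h : 1 ≤ a ∧ a < n,
    w ⟨a - 1, lt_of_le_of_lt (Nat.sub_le a 1) h.2⟩ ≠ w ⟨a, h.2⟩}

/-- The contracted word `w̄`, obtained by contracting each maximal constant run of `w`
to a single letter. -/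
def contractWord {n : ℕ} (w : Fin n → Fin 3) : List (Fin 3) :=
  (List.ofFn w).destutter (· ≠ ·)

/-- The five patterns `s₁ = 132`, `s₂ = 1232`, `s₃ = 1312`, `s₄ = 13232`, `s₅ = 13132`,
with letters `1,2,3` encoded as `0,1,2 : Fin 3`. -/
def pattern : Fin 5 → List (Fin 3)
  | 0 => [0, 2, 1]
  | 1 => [0, 1, 2, 1]
  | 2 => [0, 2, 0, 1]
  | 3 => [0, 2, 1, 2, 1]
  | 4 => [0, 2, 0, 2, 1]

/-- The `t`-set Ramsey number `R^(t)(s)`: the least `N` such that every 2-colouring of the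
`t`-element subsets of an `N`-element set admits an `s`-element subset all of whose
`t`-element subsets get the same colour. -/
noncomputable def ramseyNumber (t s : ℕ) : ℕ :=
  sInf {N : ℕ | ∀ χ : Finset (Fin N) → Fin 2,
    ∃ H : Finset (Fin N), H.card = s ∧ ∃ d : Fin 2, ∀ A ⊆ H, A.card = t → χ A = d}

/-! ### Finite hypergraph Ramsey theorem (2 colours), proved from scratch. -/

open Finset

/-- `H` is homogeneous for the colouring `χ` of `t`-sets. -/
def Homog (χ : Finset ℕ → Fin 2) (t : ℕ) (H : Finset ℕ) : Prop :=
  ∃ d, ∀ A ⊆ H, A.card = t → χ A = d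

/-- Min-homogeneous step: from Ramsey for `t`-sets, obtain arbitrarily large sets on which
the colour of a `(t+1)`-set depends only on its minimum. -/
lemma minhom (t : ℕ)
    (ih : ∀ s, ∃ N, ∀ V : Finset ℕ, N ≤ V.card → ∀ χ, ∃ H ⊆ V, H.card = s ∧ Homog χ t H) :
    ∀ m, ∃ N, ∀ V : Finset ℕ, N ≤ V.card → ∀ χ : Finset ℕ → Fin 2,
      ∃ H ⊆ V, H.card = m ∧ ∃ d : ℕ → Fin 2,
        ∀ A ⊆ H, A.card = t + 1 → ∀ x ∈ A, (∀ y ∈ A, x ≤ y) → χ A = d x := by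
  intro m
  induction m with
  | zero =>
    refine ⟨0, fun V _ χ => ⟨∅, empty_subset _, card_empty, fun _ => 0, ?_⟩⟩
    intro A hA hAc
    have : A = ∅ := subset_empty.mp hA
    simp [this] at hAc
  | succ m ihm =>
    obtain ⟨M, hM⟩ := ihm
    obtain ⟨N, hN⟩ := ih M
    refine ⟨N + 1, fun V hV χ => ?_⟩
    have hne : V.Nonempty := card_pos.mp (by omega)
    set x := V.min' hne with hxdef
    have hx : x ∈ V := V.min'_mem hne
    have hV' : N ≤ (V.erase x).card := by rw [card_erase_of_mem hx]; omega
    obtain ⟨H₁, hH₁V, hH₁c, d₀, hd₀⟩ := hN (V.erase x) hV' (fun A => χ (insert x A))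
    obtain ⟨H', hH'₁, hH'c, d', hd'⟩ := hM H₁ (le_of_eq hH₁c.symm) χ
    have hxH' : x ∉ H' := fun h => (mem_erase.mp (hH₁V (hH'₁ h))).1 rfl
    have hH'V : H' ⊆ V := fun y hy => mem_of_mem_erase (hH₁V (hH'₁ hy))
    have hxlt : ∀ y ∈ H', x < y := fun y hy =>
      lt_of_le_of_ne (V.min'_le y (hH'V hy)) (fun h => hxH' (h ▸ hy))
    refine ⟨insert x H', insert_subset hx hH'V, by rw [card_insert_of_notMem hxH', hH'c],
      Function.update d' x d₀, ?_⟩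
    intro A hA hAc z hz hzmin
    by_cases hxA : x ∈ A
    · have hzx : z = x := le_antisymm
        (hzmin x hxA)
        (by
          rcases mem_insert.mp (hA hz) with h | h
          · exact h.ge
          · exact (hxlt z h).le)
      have hAx : A = insert x (A.erase x) := (insert_erase hxA).symm
      have herase : A.erase x ⊆ H₁ := fun y hy => by
        rcases mem_insert.mp (hA (mem_of_mem_erase hy)) with h | h
        · exact absurd h (mem_erase.mp hy).1
        · exact hH'₁ h
      have hcard : (A.erase x).card = t := by rw [card_erase_of_mem hxA, hAc]; omega
      have h2 := hd₀ (A.erase x) herase hcard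
      simp only at h2
      rw [hzx, Function.update_self, hAx]
      exact h2
    · have hAH' : A ⊆ H' := fun y hy => by
        rcases mem_insert.mp (hA hy) with h | h
        · exact absurd (h ▸ hy) hxA
        · exact h
      have hzx : z ≠ x := fun h => hxA (h ▸ hz)
      rw [Function.update_of_ne hzx]
      exact hd' A hAH' hAc z hz hzmin

lemma fin2_ne_zero (a : Fin 2) : ¬ a = 0 ↔ a = 1 := by omega

/-- The finite hypergraph Ramsey theorem for two colours, over finite subsets of `ℕ`. -/
lemma ramsey_nat : ∀ t s : ℕ, ∃ N, ∀ V : Finset ℕ, N ≤ V.card → ∀ χ,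
    ∃ H ⊆ V, H.card = s ∧ Homog χ t H := by
  intro t
  induction t with
  | zero =>
    intro s
    refine ⟨s, fun V hV χ => ?_⟩
    obtain ⟨H, hHV, hHc⟩ := exists_subset_card_eq hV
    exact ⟨H, hHV, hHc, χ ∅, fun A _ hA => by rw [card_eq_zero.mp hA]⟩
  | succ t ih =>
    intro s
    obtain ⟨N, hN⟩ := minhom t ih (2 * s)
    refine ⟨N, fun V hV χ => ?_⟩
    obtain ⟨H, hHV, hHc, d, hd⟩ := hN V hV χ
    have e1 : H.filter (fun y => ¬ d y = 0) = H.filter (fun y => d y = 1) :=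
      filter_congr (fun y _ => fin2_ne_zero (d y))
    have e2 := card_filter_add_card_filter_not (s := H) (p := fun y => d y = 0)
    rw [e1] at e2
    obtain ⟨e, he⟩ : ∃ e, s ≤ (H.filter (fun y => d y = e)).card := by
      rcases le_or_gt s (H.filter (fun y => d y = 0)).card with h | h
      · exact ⟨0, h⟩
      · exact ⟨1, by omega⟩
    obtain ⟨H', hH'f, hH'c⟩ := exists_subset_card_eq he
    have hH'H : H' ⊆ H := hH'f.trans (filter_subset _ _)
    refine ⟨H', hH'H.trans hHV, hH'c, e, ?_⟩
    intro A hA hAc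
    have hAne : A.Nonempty := card_pos.mp (by omega)
    have h1 := hd A (hA.trans hH'H) hAc (A.min' hAne) (A.min'_mem hAne)
      (fun y hy => A.min'_le y hy)
    have h2 : d (A.min' hAne) = e := (mem_filter.mp (hH'f (hA (A.min'_mem hAne)))).2
    rw [h1, h2]

lemma ramseySet_nonempty (t s : ℕ) : {N : ℕ | ∀ χ : Finset (Fin N) → Fin 2,
    ∃ H : Finset (Fin N), H.card = s ∧ ∃ d : Fin 2, ∀ A ⊆ H, A.card = t → χ A = d}.Nonempty := by
  obtain ⟨N, hN⟩ := ramsey_nat t s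
  refine ⟨N, fun χ' => ?_⟩
  have hlt : ∀ A : Finset ℕ, ∀ m ∈ A.filter (· < N), m < N := fun A m hm =>
    (mem_filter.mp hm).2
  set χ : Finset ℕ → Fin 2 := fun A => χ' ((A.filter (· < N)).attachFin (hlt A)) with hχ
  obtain ⟨H, hHV, hHc, d, hd⟩ := hN (Finset.range N) (by rw [card_range]) χ
  have hHlt : ∀ m ∈ H, m < N := fun m hm => mem_range.mp (hHV hm)
  refine ⟨H.attachFin hHlt, by rw [card_attachFin, hHc], d, ?_⟩
  intro A' hA' hA'c
  set A : Finset ℕ := A'.image Fin.val with hA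
  have hAH : A ⊆ H := by
    intro a ha
    obtain ⟨v, hv, rfl⟩ := mem_image.mp ha
    exact (mem_attachFin _).mp (hA' hv)
  have hAc : A.card = t := by
    rw [hA, card_image_of_injective _ Fin.val_injective, hA'c]
  have key := hd A hAH hAc
  have hfilter : A.filter (· < N) = A :=
    filter_true_of_mem (fun a ha => hHlt a (hAH ha))
  have hattach : (A.filter (· < N)).attachFin (hlt A) = A' := by
    ext v
    rw [mem_attachFin, hfilter]
    simp [hA, Fin.val_injective.eq_iff, Fin.val_inj]
  rw [hχ] at key
  simp only at key
  rw [hattach] at key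
  exact key

lemma ramseyNumber_spec (t s : ℕ) : ∀ χ : Finset (Fin (ramseyNumber t s)) → Fin 2,
    ∃ H : Finset (Fin (ramseyNumber t s)), H.card = s ∧
      ∃ d : Fin 2, ∀ A ⊆ H, A.card = t → χ A = d :=
  Nat.sInf_mem (ramseySet_nonempty t s)

/-- Working form of the Ramsey property: inside any finset of `ℕ` of size at least
`ramseyNumber t s` one finds an `s`-set homogeneous for a given colouring of `t`-sets. -/
lemma ramsey_apply (t s : ℕ) (V : Finset ℕ) (hV : ramseyNumber t s ≤ V.card)
    (χ : Finset ℕ → Fin 2) :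
    ∃ H ⊆ V, H.card = s ∧ ∃ d : Fin 2, ∀ A ⊆ H, A.card = t → χ A = d := by
  set R := ramseyNumber t s
  obtain ⟨V', hV'V, hV'c⟩ := exists_subset_card_eq hV
  set e := V'.equivFinOfCardEq hV'c
  set m : Fin R → ℕ := fun i => ((e.symm i : V') : ℕ) with hm
  have hminj : Function.Injective m := fun a b hab => by
    apply e.symm.injective
    exact Subtype.ext hab
  have hmV : ∀ i, m i ∈ V' := fun i => (e.symm i).2
  obtain ⟨H'', hH''c, d, hd⟩ := ramseyNumber_spec t s (fun B => χ (B.image m))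
  refine ⟨H''.image m, fun a ha => ?_, ?_, d, ?_⟩
  · obtain ⟨v, hv, rfl⟩ := mem_image.mp ha
    exact hV'V (hmV v)
  · rw [card_image_of_injective _ hminj, hH''c]
  · intro A hA hAc
    set B : Finset (Fin R) := H''.filter (fun b => m b ∈ A) with hB
    have hBH : B ⊆ H'' := filter_subset _ _
    have hBA : B.image m = A := by
      apply Subset.antisymm
      · intro a ha
        obtain ⟨v, hv, rfl⟩ := mem_image.mp ha
        exact (mem_filter.mp hv).2
      · intro a ha
        obtain ⟨v, hv, rfl⟩ := mem_image.mp (hA ha)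
        exact mem_image.mpr ⟨v, mem_filter.mpr ⟨hv, ha⟩, rfl⟩
    have hBc : B.card = t := by
      rw [← hAc, ← hBA, card_image_of_injective _ hminj]
    have := hd B hBH hBc
    rw [hBA] at this
    exact this

/-! ### Words, breakpoints and contraction. -/

/-- Number of descent positions `a < i` (i.e. `l[a] ≠ l[a+1]`). -/
def bcount (l : List (Fin 3)) : ℕ → ℕ
  | 0 => 0
  | (i+1) => bcount l i + (if l[i]? ≠ l[i+1]? then 1 else 0)

lemma bcount_cons (x : Fin 3) (t : List (Fin 3)) (i : ℕ) :
    bcount (x :: t) (i + 1) = (if some x ≠ t[0]? then 1 else 0) + bcount t i := by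
  induction i with
  | zero => simp [bcount, Nat.add_comm]
  | succ i ih =>
    show bcount (x :: t) (i+1) + _ = _
    rw [ih]
    show _ + (if t[i]? ≠ t[i+1]? then 1 else 0) = _ + (bcount t i + _)
    omega

lemma destutter'_get?_zero (l : List (Fin 3)) (a : Fin 3) :
    (l.destutter' (· ≠ ·) a)[0]? = some a := by
  induction l generalizing a with
  | nil => rfl
  | cons b t ih =>
    rw [List.destutter'_cons]
    by_cases h : a = b
    · rw [if_neg (by simpa using h)]
      exact ih a
    · rw [if_pos (by simpa using h)]
      rfl

/-- The letter of `l` at position `i` equals the letter of the destuttered word at the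
position given by the number of descents before `i`. -/
lemma destutter_get (l : List (Fin 3)) : ∀ i, i < l.length →
    (l.destutter (· ≠ ·))[bcount l i]? = l[i]? := by
  induction l with
  | nil => intro i hi; simp at hi
  | cons x t ih =>
    intro i hi
    match i with
    | 0 =>
      show ((x :: t).destutter (· ≠ ·))[0]? = some x
      rw [List.destutter_cons']
      exact destutter'_get?_zero t x
    | (j+1) =>
      have hj : j < t.length := by simpa using hi
      have htne : t ≠ [] := List.ne_nil_of_length_pos (by omega)
      obtain ⟨y, r, rfl⟩ := List.exists_cons_of_ne_nil htne
      rw [bcount_cons]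
      by_cases hxy : x = y
      · have : ¬ (some x ≠ (y :: r)[0]?) := by simp [hxy]
        rw [if_neg this, List.destutter_cons_cons, if_neg (by simpa using hxy)]
        subst hxy
        rw [Nat.zero_add, ← List.destutter_cons']
        exact ih j hj
      · have : (some x ≠ (y :: r)[0]?) := by simpa using hxy
        rw [if_pos this, List.destutter_cons_cons, if_pos (by simpa using hxy)]
        rw [Nat.add_comm 1 (bcount (y::r) j)]
        show ((y :: r).destutter (· ≠ ·))[bcount (y::r) j]? = (y::r)[j]?
        exact ih j hj

lemma destutter_length (l : List (Fin 3)) : l ≠ [] →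
    (l.destutter (· ≠ ·)).length = bcount l (l.length - 1) + 1 := by
  induction l with
  | nil => intro h; exact absurd rfl h
  | cons x t ih =>
    intro _
    match t with
    | [] => rfl
    | (y :: r) =>
      have hlen : (x :: y :: r).length - 1 = (y :: r).length - 1 + 1 := by
        simp
      rw [hlen, bcount_cons]
      by_cases hxy : x = y
      · have : ¬ (some x ≠ (y :: r)[0]?) := by simp [hxy]
        rw [if_neg this, List.destutter_cons_cons, if_neg (by simpa using hxy)]
        subst hxy
        rw [Nat.zero_add, ← List.destutter_cons']
        exact ih (by simp)
      · have : (some x ≠ (y :: r)[0]?) := by simpa using hxy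
        rw [if_pos this, List.destutter_cons_cons, if_pos (by simpa using hxy)]
        rw [List.length_cons, ← List.destutter_cons', ih (by simp)]
        omega

lemma ofFn_get? {n : ℕ} (w : Fin n → Fin 3) (i : ℕ) (h : i < n) :
    (List.ofFn w)[i]? = some (w ⟨i, h⟩) := by
  rw [List.getElem?_eq_getElem (by simpa using h)]
  simp

lemma mem_break_iff {n : ℕ} (w : Fin n → Fin 3) (a : ℕ) (h : a + 1 < n) :
    ((List.ofFn w)[a]? ≠ (List.ofFn w)[a+1]?) ↔ (a+1) ∈ breakpoints w := by
  rw [ofFn_get? w a (by omega), ofFn_get? w (a+1) h]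
  constructor
  · intro hne
    exact ⟨⟨by omega, h⟩, by simpa using hne⟩
  · rintro ⟨h', hne⟩
    simp only [ne_eq, Option.some_inj]
    intro heq
    apply hne
    convert heq using 2
    simp

lemma bcount_eq_of_breakpoints_eq {n : ℕ} (w w' : Fin n → Fin 3)
    (hb : breakpoints w = breakpoints w') :
    ∀ i, i < n → bcount (List.ofFn w) i = bcount (List.ofFn w') i := by
  intro i
  induction i with
  | zero => intro _; rfl
  | succ i ih =>
    intro hi
    show bcount _ i + _ = bcount _ i + _
    rw [ih (by omega)]
    congr 1
    refine if_congr ?_ rfl rfl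
    rw [mem_break_iff w i hi, mem_break_iff w' i hi, hb]

/-- A word over `[3]` is uniquely determined by its breakpoint set together with its
contracted word. -/
lemma word_unique {n : ℕ} (w w' : Fin n → Fin 3)
    (hb : breakpoints w = breakpoints w') (hc : contractWord w = contractWord w') :
    w = w' := by
  funext i
  have h1 : (contractWord w)[bcount (List.ofFn w) i]? = (List.ofFn w)[(i : ℕ)]? :=
    destutter_get (List.ofFn w) i (by simpa using i.2)
  have h2 : (contractWord w')[bcount (List.ofFn w') i]? = (List.ofFn w')[(i : ℕ)]? :=
    destutter_get (List.ofFn w') i (by simpa using i.2)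
  rw [bcount_eq_of_breakpoints_eq w w' hb i i.2, hc, h2] at h1
  rw [ofFn_get? w i i.2, ofFn_get? w' i i.2] at h1
  exact (Option.some_inj.mp h1).symm

/-- The breakpoint set of `w`, as a finset. -/
noncomputable def Bfin {n : ℕ} (w : Fin n → Fin 3) : Finset ℕ :=
  ((Finset.range (n-1)).filter
    (fun a => (List.ofFn w)[a]? ≠ (List.ofFn w)[a+1]?)).image (· + 1)

lemma coe_Bfin {n : ℕ} (w : Fin n → Fin 3) : ↑(Bfin w) = breakpoints w := by
  ext b
  simp only [Bfin, coe_image, Set.mem_image, mem_coe, mem_filter, mem_range]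
  constructor
  · rintro ⟨a, ⟨ha, hne⟩, rfl⟩
    exact (mem_break_iff w a (by omega)).mp hne
  · intro hb
    obtain ⟨⟨h1, h2⟩, -⟩ := id hb
    refine ⟨b - 1, ⟨by omega, ?_⟩, by omega⟩
    rw [mem_break_iff w (b-1) (by omega)]
    have : b - 1 + 1 = b := by omega
    rw [this]
    exact hb

lemma bcount_eq_card (l : List (Fin 3)) (i : ℕ) :
    bcount l i = ((Finset.range i).filter (fun a => l[a]? ≠ l[a+1]?)).card := by
  induction i with
  | zero => simp [bcount]
  | succ i ih =>
    rw [range_add_one, filter_insert]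
    show bcount l i + _ = _
    by_cases h : l[i]? ≠ l[i+1]?
    · rw [if_pos h, if_pos h, card_insert_of_notMem (fun hmem => by
        simpa using (mem_filter.mp hmem).1), ih]
    · rw [if_neg h, if_neg h, ih, Nat.add_zero]

lemma card_Bfin {n : ℕ} (w : Fin n → Fin 3) :
    (Bfin w).card = bcount (List.ofFn w) (n - 1) := by
  rw [Bfin, card_image_of_injective _ (add_left_injective 1), bcount_eq_card]

lemma contract_length {n : ℕ} (hn : 1 ≤ n) (w : Fin n → Fin 3) :
    (contractWord w).length = (Bfin w).card + 1 := by
  rw [card_Bfin, contractWord, destutter_length _ (by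
    intro h
    have hl : (List.ofFn w).length = n := by simp
    rw [h] at hl
    simp at hl
    omega)]
  simp

open Classical in
/-- The induced colouring of breakpoint sets: colour of the unique word with breakpoint
set `A` and contracted word `p`, if it exists. -/
noncomputable def patColour {n : ℕ} (c : (Fin n → Fin 3) → Fin 2) (p : List (Fin 3))
    (A : Finset ℕ) : Fin 2 :=
  if h : ∃ w : Fin n → Fin 3, breakpoints w = ↑A ∧ contractWord w = p then c h.choose else 0

lemma patColour_eq {n : ℕ} (c : (Fin n → Fin 3) → Fin 2) (p : List (Fin 3))
    (w : Fin n → Fin 3) (A : Finset ℕ)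
    (hA : breakpoints w = ↑A) (hw : contractWord w = p) : patColour c p A = c w := by
  have hex : ∃ w' : Fin n → Fin 3, breakpoints w' = ↑A ∧ contractWord w' = p := ⟨w, hA, hw⟩
  simp only [patColour]
  rw [dif_pos hex]
  obtain ⟨hb', hc'⟩ := hex.choose_spec
  rw [word_unique hex.choose w (by rw [hb', hA]) (by rw [hc', hw])]

/-- For `n ≥ n₅ + 1` (with `n₀ = 4`, `n₁ = R^(2)(n₀)`, `n₂ = R^(3)(n₁)`, `n₃ = R^(3)(n₂)`,
`n₄ = R^(4)(n₃)`, `n₅ = R^(4)(n₄)`), for every 2-colouring `c` of `[3]^n` there are a set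
`T₀ ⊆ {1,…,n-1}` with `|T₀| ≥ 4` and colours `d₁,…,d₅` such that every word with
breakpoints inside `T₀` and contracted pattern `sᵢ` has colour `dᵢ`. -/
theorem pattern_colouring_exists (n : ℕ)
    (hn : ramseyNumber 4 (ramseyNumber 4 (ramseyNumber 3 (ramseyNumber 3
            (ramseyNumber 2 4)))) + 1 ≤ n)
    (c : (Fin n → Fin 3) → Fin 2) :
    ∃ T₀ : Finset ℕ, T₀ ⊆ Finset.Ico 1 n ∧ 4 ≤ T₀.card ∧
      ∃ d : Fin 5 → Fin 2, ∀ (i : Fin 5) (w : Fin n → Fin 3),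
        breakpoints w ⊆ ↑T₀ → contractWord w = pattern i → c w = d i := by
  classical
  set N₁ := ramseyNumber 2 4 with hN₁
  set N₂ := ramseyNumber 3 N₁ with hN₂
  set N₃ := ramseyNumber 3 N₂ with hN₃
  set N₄ := ramseyNumber 4 N₃ with hN₄
  have hVcard : ramseyNumber 4 N₄ ≤ (Finset.Ico 1 n).card := by
    rw [Nat.card_Ico]; omega
  obtain ⟨H₄, hH₄, hH₄c, d₄, hd₄⟩ := ramsey_apply 4 N₄ (Finset.Ico 1 n) hVcard
    (patColour c (pattern 4))
  obtain ⟨H₃, hH₃, hH₃c, d₃, hd₃⟩ := ramsey_apply 4 N₃ H₄ (le_of_eq hH₄c.symm)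
    (patColour c (pattern 3))
  obtain ⟨H₂, hH₂, hH₂c, d₂, hd₂⟩ := ramsey_apply 3 N₂ H₃ (le_of_eq hH₃c.symm)
    (patColour c (pattern 2))
  obtain ⟨H₁, hH₁, hH₁c, d₁, hd₁⟩ := ramsey_apply 3 N₁ H₂ (le_of_eq hH₂c.symm)
    (patColour c (pattern 1))
  obtain ⟨H₀, hH₀, hH₀c, d₀, hd₀⟩ := ramsey_apply 2 4 H₁ (le_of_eq hH₁c.symm)
    (patColour c (pattern 0))
  have hsub1 : H₀ ⊆ H₁ := hH₀
  have hsub2 : H₀ ⊆ H₂ := hsub1.trans hH₁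
  have hsub3 : H₀ ⊆ H₃ := hsub2.trans hH₂
  have hsub4 : H₀ ⊆ H₄ := hsub3.trans hH₃
  refine ⟨H₀, hsub4.trans hH₄, le_of_eq hH₀c.symm, ![d₀, d₁, d₂, d₃, d₄], ?_⟩
  intro i w hbw hcw
  have hn1 : 1 ≤ n := by omega
  have hA : ↑(Bfin w) = breakpoints w := coe_Bfin w
  have hsub : Bfin w ⊆ H₀ := by
    rw [← Finset.coe_subset, hA]; exact hbw
  have hlen : (Bfin w).card + 1 = (pattern i).length := by
    rw [← contract_length hn1 w, hcw]
  have hc' : c w = patColour c (pattern i) (Bfin w) :=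
    (patColour_eq c (pattern i) w (Bfin w) hA.symm hcw).symm
  fin_cases i
  · have hcard : (Bfin w).card = 2 := by have h3 : (Bfin w).card + 1 = 3 := hlen; omega
    rw [hc']
    show patColour c (pattern 0) (Bfin w) = d₀
    exact hd₀ (Bfin w) hsub hcard
  · have hcard : (Bfin w).card = 3 := by have h3 : (Bfin w).card + 1 = 4 := hlen; omega
    rw [hc']
    show patColour c (pattern 1) (Bfin w) = d₁
    exact hd₁ (Bfin w) (hsub.trans hsub1) hcard
  · have hcard : (Bfin w).card = 3 := by have h3 : (Bfin w).card + 1 = 4 := hlen; omega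
    rw [hc']
    show patColour c (pattern 2) (Bfin w) = d₂
    exact hd₂ (Bfin w) (hsub.trans hsub2) hcard
  · have hcard : (Bfin w).card = 4 := by have h3 : (Bfin w).card + 1 = 5 := hlen; omega
    rw [hc']
    show patColour c (pattern 3) (Bfin w) = d₃
    exact hd₃ (Bfin w) (hsub.trans hsub3) hcard
  · have hcard : (Bfin w).card = 4 := by have h3 : (Bfin w).card + 1 = 5 := hlen; omega
    rw [hc']
    show patColour c (pattern 4) (Bfin w) = d₄
    exact hd₄ (Bfin w) (hsub.trans hsub4) hcard
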